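/- Let φ be an Orlicz function with lim_{u→∞} φ(u)/u = ∞ (e.g. an N-function). Then for every nonzero x in the Orlicz–Lorentz space with ‖x‖° = 1, the set K(x) = {k > 0 : ‖x‖° = (1/k)(1 + ρ_{φ,ω}(kx))} is nonempty; in particular k** = sup{k > 0 : ∫₀^∞ ψ(p(k x*(t))) ω(t) dt ≤ 1} is finite. -/

import Mathlib

open MeasureTheory Set Filter
open scoped ENNReal
open scoped Topology

/-- Distribution function `μ_f(λ) = μ{s ∈ (0,∞) : |f s| > λ}`. -/
noncomputable def distrib (f : ℝ → ℝ) (lam : ℝ≥0∞) : ℝ≥0∞ :=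
  volume {s ∈ Set.Ioi (0 : ℝ) | lam < ENNReal.ofReal |f s|}

/-- Decreasing rearrangement `f*(t) = inf {λ : μ_f(λ) ≤ t}`. -/
noncomputable def rearr (f : ℝ → ℝ) (t : ℝ) : ℝ≥0∞ :=
  sInf {lam : ℝ≥0∞ | distrib f lam ≤ ENNReal.ofReal t}

/-- Extension of an Orlicz function to `ℝ≥0∞` (Orlicz functions tend to `∞` at `∞`). -/
noncomputable def phiE (φ : ℝ → ℝ) (a : ℝ≥0∞) : ℝ≥0∞ :=
  if a = ∞ then ∞ else ENNReal.ofReal (φ a.toReal)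

/-- The Orlicz–Lorentz modular `ρ_{φ,ω}(f) = ∫₀^∞ φ(f*(t)) ω(t) dt`. -/
noncomputable def rho (φ ω f : ℝ → ℝ) : ℝ≥0∞ :=
  ∫⁻ t in Set.Ioi (0 : ℝ), phiE φ (rearr f t) * ENNReal.ofReal (ω t)

/-- The Luxemburg norm `‖f‖ = inf {λ > 0 : ρ_{φ,ω}(f/λ) ≤ 1}`. -/
noncomputable def luxNorm (φ ω f : ℝ → ℝ) : ℝ≥0∞ :=
  sInf (Set.image (fun lam : ℝ => ENNReal.ofReal lam)
    {lam : ℝ | 0 < lam ∧ rho φ ω (fun t => lam⁻¹ * f t) ≤ 1})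

/-- The Orlicz norm `‖f‖° = inf_{k>0} (1/k)(1 + ρ_{φ,ω}(k f))`. -/
noncomputable def orliczNorm (φ ω f : ℝ → ℝ) : ℝ≥0∞ :=
  ⨅ k ∈ Set.Ioi (0 : ℝ), ENNReal.ofReal k⁻¹ * (1 + rho φ ω (fun t => k * f t))

section AuxLemmas

lemma distrib_anti (f : ℝ → ℝ) : Antitone (distrib f) :=
  fun _ _ hab => measure_mono fun _ hs => ⟨hs.1, lt_of_le_of_lt hab hs.2⟩

lemma rearr_anti (f : ℝ → ℝ) : Antitone (rearr f) :=
  fun _ _ hab => sInf_le_sInf fun _ hlam => hlam.trans (ENNReal.ofReal_le_ofReal hab)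

lemma phiE_ofReal (φ : ℝ → ℝ) {u : ℝ} (hu : 0 ≤ u) :
    phiE φ (ENNReal.ofReal u) = ENNReal.ofReal (φ u) := by
  rw [phiE, if_neg ENNReal.ofReal_ne_top, ENNReal.toReal_ofReal hu]

lemma phiE_mono {φ : ℝ → ℝ} (hmono : MonotoneOn φ (Ici 0)) : Monotone (phiE φ) := by
  intro a b hab
  by_cases hb : b = ∞
  · subst hb; simp [phiE]
  · have ha : a ≠ ∞ := fun h => hb (top_le_iff.mp (h ▸ hab))
    rw [phiE, if_neg ha, phiE, if_neg hb]
    exact ENNReal.ofReal_le_ofReal (hmono ENNReal.toReal_nonneg ENNReal.toReal_nonneg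
      ((ENNReal.toReal_le_toReal ha hb).mpr hab))

lemma phi_monoOn {φ : ℝ → ℝ} (hconv : ConvexOn ℝ (Ici 0) φ) (hφ0 : φ 0 = 0)
    (hφnn : ∀ u ≥ (0:ℝ), 0 ≤ φ u) : MonotoneOn φ (Ici 0) := by
  intro u hu v hv huv
  rcases eq_or_lt_of_le huv with h | h
  · rw [h]
  have hv0 : 0 < v := lt_of_le_of_lt hu h
  have h1 : (0:ℝ) ≤ 1 - u / v := by
    have : u / v ≤ 1 := (div_le_one hv0).mpr huv
    linarith
  have key := hconv.2 (self_mem_Ici (a := (0:ℝ))) (mem_Ici.mpr hv0.le) h1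
    (div_nonneg hu hv0.le) (by ring)
  simp only [smul_eq_mul, hφ0, mul_zero, zero_add] at key
  rw [div_mul_cancel₀ u hv0.ne'] at key
  calc φ u ≤ u / v * φ v := key
    _ ≤ 1 * φ v := mul_le_mul_of_nonneg_right ((div_le_one hv0).mpr huv) (hφnn v hv0.le)
    _ = φ v := one_mul _

lemma rearr_smul (x : ℝ → ℝ) {k : ℝ} (hk : 0 < k) (t : ℝ) :
    rearr (fun s => k * x s) t = ENNReal.ofReal k * rearr x t := by
  set c := ENNReal.ofReal k with hc
  have hc0 : c ≠ 0 := ne_of_gt (ENNReal.ofReal_pos.mpr hk)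
  have hctop : c ≠ ∞ := ENNReal.ofReal_ne_top
  have hcan : ∀ lam : ℝ≥0∞, c * (c⁻¹ * lam) = lam := fun lam => by
    rw [← mul_assoc, ENNReal.mul_inv_cancel hc0 hctop, one_mul]
  have hcan' : ∀ lam : ℝ≥0∞, c⁻¹ * (c * lam) = lam := fun lam => by
    rw [← mul_assoc, ENNReal.inv_mul_cancel hc0 hctop, one_mul]
  have hdis : ∀ lam : ℝ≥0∞, distrib (fun s => k * x s) lam = distrib x (c⁻¹ * lam) := by
    intro lam
    unfold distrib
    congr 1
    ext s
    simp only [mem_setOf_eq, and_congr_right_iff]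
    intro _
    rw [abs_mul, abs_of_pos hk, ENNReal.ofReal_mul hk.le, ← hc]
    constructor
    · intro h
      have := (ENNReal.mul_lt_mul_iff_right (a := c⁻¹) (by simpa using hctop)
        (by simpa using hc0)).mpr h
      rwa [hcan'] at this
    · intro h
      have := (ENNReal.mul_lt_mul_iff_right (a := c) hc0 hctop).mpr h
      rwa [hcan] at this
  have hset : {lam : ℝ≥0∞ | distrib (fun s => k * x s) lam ≤ ENNReal.ofReal t}
      = (fun mu => c * mu) '' {mu : ℝ≥0∞ | distrib x mu ≤ ENNReal.ofReal t} := by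
    ext lam
    constructor
    · intro h
      exact ⟨c⁻¹ * lam, by rwa [mem_setOf_eq, ← hdis], hcan lam⟩
    · rintro ⟨mu, hmu, rfl⟩
      rw [mem_setOf_eq, hdis, hcan']
      exact hmu
  rw [rearr, hset, sInf_image', rearr, sInf_eq_iInf', ENNReal.mul_iInf_of_ne hc0 hctop]

end AuxLemmas

/-- If `φ` is an N-function (`φ(u)/u → 0` at `0`, `φ(u)/u → ∞` at `∞`),
with right-derivative `p` and complementary function `ψ`, then for every nonzero `x` in
the Orlicz–Lorentz space with `‖x‖° = 1`, the set
`K(x) = {k > 0 : ‖x‖° = (1/k)(1 + ρ_{φ,ω}(kx))}` is nonempty; in particular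
`k** = sup {k > 0 : ∫₀^∞ ψ(p(k x*(t))) ω(t) dt ≤ 1}` is finite. -/
theorem K_nonempty_of_N_function (φ ψ p ω x : ℝ → ℝ)
    (hconv : ConvexOn ℝ (Set.Ici 0) φ) (hφ0 : φ 0 = 0)
    (hφpos : ∀ u > (0 : ℝ), 0 < φ u)
    (hN0 : Tendsto (fun u => φ u / u) (nhdsWithin 0 (Set.Ioi 0)) (nhds 0))
    (hNinf : Tendsto (fun u => φ u / u) atTop atTop)
    (hpmono : MonotoneOn p (Set.Ici 0)) (hpnn : ∀ u ≥ (0 : ℝ), 0 ≤ p u)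
    (hφint : ∀ u ≥ (0 : ℝ), φ u = ∫ t in Set.Ioc (0 : ℝ) u, p t)
    (hψ : ∀ v ≥ (0 : ℝ), ψ v = sSup (Set.image (fun u => u * v - φ u) (Set.Ioi (0 : ℝ))))
    (hωanti : AntitoneOn ω (Set.Ioi 0)) (hωpos : ∀ t > (0 : ℝ), 0 < ω t)
    (hωloc : ∀ b > (0 : ℝ), ∫⁻ t in Set.Ioc (0 : ℝ) b, ENNReal.ofReal (ω t) < ∞)
    (hW : ∫⁻ t in Set.Ioi (0 : ℝ), ENNReal.ofReal (ω t) = ∞)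
    (hxmeas : Measurable x)
    (hxne : volume {t ∈ Set.Ioi (0 : ℝ) | x t ≠ 0} ≠ 0)
    (hxnorm : orliczNorm φ ω x = 1) :
    (∃ k : ℝ, 0 < k ∧
      orliczNorm φ ω x = ENNReal.ofReal k⁻¹ * (1 + rho φ ω (fun t => k * x t))) ∧
    BddAbove {k : ℝ | 0 < k ∧
      (∫⁻ t in Set.Ioi (0 : ℝ),
        ENNReal.ofReal (ψ (p (k * (rearr x t).toReal)) * ω t)) ≤ 1} := by
  classical
  -- basic positivity/monotonicity facts for φ
  have hφnn : ∀ u ≥ (0:ℝ), 0 ≤ φ u := by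
    intro u hu
    rcases eq_or_lt_of_le hu with h | h
    · rw [← h, hφ0]
    · exact (hφpos u h).le
  have hφmono := phi_monoOn hconv hφ0 hφnn
  have hpE := phiE_mono hφmono
  set X : ℝ → ℝ≥0∞ := rearr x with hX
  have hXanti : Antitone X := rearr_anti x
  -- extended weight
  set g : ℝ → ℝ≥0∞ := fun t => if 0 < t then ENNReal.ofReal (ω t) else ∞ with hgdef
  have hganti : Antitone g := by
    intro s t hst
    by_cases hs : 0 < s
    · have ht : 0 < t := lt_of_lt_of_le hs hst
      simp only [hgdef, if_pos hs, if_pos ht]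
      exact ENNReal.ofReal_le_ofReal (hωanti hs ht hst)
    · simp only [hgdef, if_neg hs]
      exact le_top
  have hgmeas : Measurable g := hganti.measurable
  have hgeq : ∀ t ∈ Ioi (0:ℝ), ENNReal.ofReal (ω t) = g t := by
    intro t ht
    simp only [hgdef, if_pos (mem_Ioi.mp ht)]
  -- the modular as a function of the scaling parameter
  set G : ℝ → ℝ≥0∞ := fun k => ∫⁻ t in Ioi (0:ℝ), phiE φ (ENNReal.ofReal k * X t) * g t
    with hGdef
  have hrhoG : ∀ k : ℝ, 0 < k → rho φ ω (fun t => k * x t) = G k := by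
    intro k hk
    rw [rho]
    exact setLIntegral_congr_fun measurableSet_Ioi (fun t ht => by
      rw [rearr_smul x hk, hgeq t ht, hX])
  have hGmono : Monotone G := by
    intro k₁ k₂ h
    exact lintegral_mono fun t =>
      mul_le_mul' (hpE (mul_le_mul' (ENNReal.ofReal_le_ofReal h) le_rfl)) le_rfl
  set F : ℝ → ℝ≥0∞ := fun k => ENNReal.ofReal k⁻¹ * (1 + G k) with hFdef
  have hxF : (⨅ k ∈ Ioi (0:ℝ), F k) = 1 := by
    have hON : orliczNorm φ ω x
        = ⨅ k ∈ Ioi (0:ℝ), ENNReal.ofReal k⁻¹ * (1 + rho φ ω (fun t => k * x t)) := rfl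
    rw [← hxnorm, hON]
    exact iInf_congr fun k => iInf_congr fun hk => by
      show ENNReal.ofReal k⁻¹ * (1 + G k) = _
      rw [hrhoG k (mem_Ioi.mp hk)]
  have hFge : ∀ k : ℝ, 0 < k → 1 ≤ F k := by
    intro k hk
    calc (1:ℝ≥0∞) = ⨅ k ∈ Ioi (0:ℝ), F k := hxF.symm
      _ ≤ F k := iInf₂_le k (mem_Ioi.mpr hk)
  have hFlt : ∀ ε : ℝ≥0∞, 0 < ε → ∃ k, 0 < k ∧ F k < 1 + ε := by
    intro ε hε
    have h1 : (⨅ k ∈ Ioi (0:ℝ), F k) < 1 + ε := by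
      rw [hxF]; exact ENNReal.lt_add_right ENNReal.one_ne_top hε.ne'
    simp only [iInf_lt_iff, mem_Ioi] at h1
    obtain ⟨k, hk, h⟩ := h1
    exact ⟨k, hk, h⟩
  -- generic lower bound for integrals over (0, d]
  have hlow : ∀ (f : ℝ → ℝ≥0∞) (cc : ℝ≥0∞) (d : ℝ), 0 < d →
      (∀ t ∈ Ioc (0:ℝ) d, cc ≤ f t) →
      cc * ENNReal.ofReal d ≤ ∫⁻ t in Ioi (0:ℝ), f t := by
    intro f cc d hd hc
    calc cc * ENNReal.ofReal d = cc * volume (Ioc (0:ℝ) d) := by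
          rw [Real.volume_Ioc, sub_zero]
      _ = ∫⁻ _ in Ioc (0:ℝ) d, cc := (setLIntegral_const _ _).symm
      _ ≤ ∫⁻ t in Ioc (0:ℝ) d, f t :=
          lintegral_mono_ae ((ae_restrict_iff' measurableSet_Ioc).mpr (ae_of_all _ hc))
      _ ≤ ∫⁻ t in Ioi (0:ℝ), f t := lintegral_mono_set Ioc_subset_Ioi_self
  -- a scaling parameter at which the modular is finite
  obtain ⟨k₀, hk₀pos, hFk₀⟩ := hFlt 1 zero_lt_one
  have hGk₀ : G k₀ ≠ ∞ := by
    intro h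
    have hFtop : F k₀ = ∞ := by
      show ENNReal.ofReal k₀⁻¹ * (1 + G k₀) = ∞
      rw [h, add_top, ENNReal.mul_top
        (ne_of_gt (ENNReal.ofReal_pos.mpr (inv_pos.mpr hk₀pos)))]
    rw [hFtop] at hFk₀
    exact (not_top_lt hFk₀)
  -- the rearrangement is finite on (0,∞)
  have hXfin : ∀ t ∈ Ioi (0:ℝ), X t ≠ ∞ := by
    intro t₂ ht₂ htop
    have ht₂0 : 0 < t₂ := mem_Ioi.mp ht₂
    have hbig : ∀ t ∈ Ioc (0:ℝ) t₂,
        (⊤ : ℝ≥0∞) * ENNReal.ofReal (ω t₂) ≤ phiE φ (ENNReal.ofReal k₀ * X t) * g t := by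
      intro t ht
      have hXt : X t = ⊤ := top_le_iff.mp (htop ▸ hXanti ht.2)
      have hmm : ENNReal.ofReal k₀ * X t = ⊤ := by
        rw [hXt, ENNReal.mul_top (ne_of_gt (ENNReal.ofReal_pos.mpr hk₀pos))]
      have hphi : phiE φ (ENNReal.ofReal k₀ * X t) = ⊤ := by rw [hmm, phiE, if_pos rfl]
      rw [hphi]
      refine mul_le_mul' le_rfl ?_
      rw [← hgeq t (Ioc_subset_Ioi_self ht)]
      exact ENNReal.ofReal_le_ofReal (hωanti (mem_Ioi.mpr ht.1) (mem_Ioi.mpr ht₂0) ht.2)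
    have hin := hlow _ _ t₂ ht₂0 hbig
    have h2 : (⊤:ℝ≥0∞) * ENNReal.ofReal (ω t₂) * ENNReal.ofReal t₂ = ⊤ := by
      rw [ENNReal.top_mul (ne_of_gt (ENNReal.ofReal_pos.mpr (hωpos t₂ ht₂0))),
        ENNReal.top_mul (ne_of_gt (ENNReal.ofReal_pos.mpr ht₂0))]
    exact hGk₀ (top_le_iff.mp (le_trans (le_of_eq h2.symm) hin))
  -- a positive lower bound for X near 0
  have hd0 : distrib x 0 ≠ 0 := by
    have hsets : {s | s ∈ Ioi (0:ℝ) ∧ (0:ℝ≥0∞) < ENNReal.ofReal |x s|}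
        = {t | t ∈ Ioi (0:ℝ) ∧ x t ≠ 0} := by
      ext s
      simp [ENNReal.ofReal_pos, abs_pos]
    show volume _ ≠ 0
    rw [hsets]
    exact hxne
  have hex : ∃ n : ℕ, distrib x (ENNReal.ofReal (1/((n:ℝ)+1))) ≠ 0 := by
    by_contra h
    push_neg at h
    have hsub : {s | s ∈ Ioi (0:ℝ) ∧ (0:ℝ≥0∞) < ENNReal.ofReal |x s|}
        ⊆ ⋃ n : ℕ, {s | s ∈ Ioi (0:ℝ) ∧
            ENNReal.ofReal (1/((n:ℝ)+1)) < ENNReal.ofReal |x s|} := by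
      intro s hs
      have hxs : 0 < |x s| := by
        have := hs.2
        rwa [ENNReal.ofReal_pos] at this
      obtain ⟨n, hn⟩ := exists_nat_one_div_lt hxs
      exact mem_iUnion.mpr ⟨n, hs.1, by
        rw [ENNReal.ofReal_lt_ofReal_iff hxs]; exact hn⟩
    exact hd0 (measure_mono_null hsub (measure_iUnion_null fun n => h n))
  obtain ⟨n₀, hn₀⟩ := hex
  set r₀ : ℝ := 1/((n₀:ℝ)+1) with hr₀def
  have hr₀pos : 0 < r₀ := by positivity
  set D := distrib x (ENNReal.ofReal r₀) with hDdef
  obtain ⟨d, hd, hdD⟩ : ∃ d : ℝ, 0 < d ∧ ENNReal.ofReal d < D := by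
    by_cases hD : D = ∞
    · exact ⟨1, one_pos, by rw [hD]; exact ENNReal.ofReal_lt_top⟩
    · have hDpos : 0 < D.toReal := ENNReal.toReal_pos hn₀ hD
      exact ⟨D.toReal/2, by positivity,
        (ENNReal.ofReal_lt_iff_lt_toReal (by positivity) hD).mpr (by linarith)⟩
  have hXge : ∀ t ∈ Ioc (0:ℝ) d, ENNReal.ofReal r₀ ≤ X t := by
    intro t ht
    show ENNReal.ofReal r₀ ≤ sInf {lam : ℝ≥0∞ | distrib x lam ≤ ENNReal.ofReal t}
    refine le_sInf fun b hb => ?_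
    by_contra hlt
    push_neg at hlt
    have h1 : D ≤ ENNReal.ofReal t := le_trans (distrib_anti x hlt.le) hb
    exact absurd (lt_of_le_of_lt (h1.trans (ENNReal.ofReal_le_ofReal ht.2)) hdD)
      (lt_irrefl _)
  have hωd : 0 < ω d := hωpos d hd
  -- the threshold from superlinearity of φ
  set A : ℝ := 2/(r₀*(ω d * d)) + |φ 1| + 2/(ω d * d) with hAdef
  obtain ⟨U, hU⟩ : ∃ U : ℝ, ∀ u ≥ U, A ≤ φ u / u :=
    eventually_atTop.mp (hNinf.eventually (eventually_ge_atTop A))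
  -- for large k, F k is at least 2
  set b : ℝ := max 1 (U/r₀) with hbdef
  have hGlbk : ∀ k : ℝ, b ≤ k → (2:ℝ≥0∞) ≤ F k := by
    intro k hk
    have hk1 : (1:ℝ) ≤ k := le_trans (le_max_left _ _) hk
    have hk0 : 0 < k := lt_of_lt_of_le one_pos hk1
    have hkr : U ≤ k * r₀ := by
      rw [← div_le_iff₀ hr₀pos]
      exact le_trans (le_max_right _ _) hk
    have hkr0 : 0 < k * r₀ := by positivity
    have hA := hU _ hkr
    have hphi : A * (k * r₀) ≤ φ (k * r₀) := (le_div_iff₀ hkr0).mp hA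
    have hpt : ∀ t ∈ Ioc (0:ℝ) d,
        ENNReal.ofReal (φ (k * r₀) * ω d) ≤ phiE φ (ENNReal.ofReal k * X t) * g t := by
      intro t ht
      rw [ENNReal.ofReal_mul (hφnn _ hkr0.le)]
      refine mul_le_mul' ?_ ?_
      · have h1 : ENNReal.ofReal (k * r₀) ≤ ENNReal.ofReal k * X t := by
          rw [ENNReal.ofReal_mul hk0.le]
          exact mul_le_mul' le_rfl (hXge t ht)
        calc ENNReal.ofReal (φ (k * r₀)) = phiE φ (ENNReal.ofReal (k*r₀)) :=
              (phiE_ofReal φ hkr0.le).symm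
          _ ≤ _ := hpE h1
      · rw [← hgeq t (Ioc_subset_Ioi_self ht)]
        exact ENNReal.ofReal_le_ofReal (hωanti (mem_Ioi.mpr ht.1) (mem_Ioi.mpr hd) ht.2)
    have hint := hlow _ _ d hd hpt
    have hanz : 0 < r₀ * (ω d * d) := by positivity
    have hA1 : 2/(r₀*(ω d * d)) ≤ A := by
      have h6 : (0:ℝ) ≤ |φ 1| := abs_nonneg _
      have h7 : (0:ℝ) ≤ 2/(ω d * d) := by positivity
      rw [hAdef]; linarith
    have hreal : (2:ℝ) ≤ k⁻¹ * (φ (k * r₀) * ω d * d) := by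
      have e2 : (2:ℝ) ≤ A * (r₀ * (ω d * d)) := by
        calc (2:ℝ) = 2/(r₀*(ω d * d)) * (r₀ * (ω d * d)) :=
              (div_mul_cancel₀ 2 hanz.ne').symm
          _ ≤ A * (r₀ * (ω d * d)) := mul_le_mul_of_nonneg_right hA1 hanz.le
      have e1 : k⁻¹ * (A * (k * r₀) * ω d * d) = A * (r₀ * (ω d * d)) := by
        field_simp
      have e3 : k⁻¹ * (A * (k * r₀) * ω d * d) ≤ k⁻¹ * (φ (k * r₀) * ω d * d) := by
        have : A * (k * r₀) * ω d * d ≤ φ (k * r₀) * ω d * d := by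
          have := mul_le_mul_of_nonneg_right hphi hωd.le
          exact mul_le_mul_of_nonneg_right this hd.le
        exact mul_le_mul_of_nonneg_left this (by positivity)
      rw [e1] at e3
      exact e2.trans e3
    calc (2:ℝ≥0∞) = ENNReal.ofReal 2 := by norm_num
      _ ≤ ENNReal.ofReal (k⁻¹ * (φ (k*r₀) * ω d * d)) := ENNReal.ofReal_le_ofReal hreal
      _ = ENNReal.ofReal k⁻¹ * (ENNReal.ofReal (φ (k*r₀) * ω d) * ENNReal.ofReal d) := by
          rw [ENNReal.ofReal_mul (by positivity : (0:ℝ) ≤ k⁻¹),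
            ENNReal.ofReal_mul (mul_nonneg (hφnn _ hkr0.le) hωd.le)]
      _ ≤ ENNReal.ofReal k⁻¹ * G k := mul_le_mul' le_rfl hint
      _ ≤ ENNReal.ofReal k⁻¹ * (1 + G k) := mul_le_mul' le_rfl le_add_self
      _ = F k := rfl
  -- a minimizing sequence inside [2⁻¹, b]
  have hseq : ∀ n : ℕ, ∃ k, k ∈ Icc (2⁻¹:ℝ) b ∧ F k < 1 + ENNReal.ofReal (1/((n:ℝ)+1)) := by
    intro n
    obtain ⟨k, hk0, hklt⟩ := hFlt (ENNReal.ofReal (1/((n:ℝ)+1)))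
      (ENNReal.ofReal_pos.mpr (by positivity))
    have hF2 : F k < 2 := by
      refine lt_of_lt_of_le hklt ?_
      have h1 : ENNReal.ofReal (1/((n:ℝ)+1)) ≤ 1 := by
        rw [← ENNReal.ofReal_one]
        refine ENNReal.ofReal_le_ofReal ?_
        rw [div_le_one (by positivity)]
        simp [Nat.cast_nonneg]
      calc (1:ℝ≥0∞) + ENNReal.ofReal (1/((n:ℝ)+1)) ≤ 1 + 1 := add_le_add le_rfl h1
        _ = 2 := one_add_one_eq_two
    refine ⟨k, ⟨?_, ?_⟩, hklt⟩
    · by_contra hak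
      push_neg at hak
      have h2k : (2:ℝ) ≤ k⁻¹ := by
        rw [show (2:ℝ) = (2⁻¹:ℝ)⁻¹ by norm_num]
        exact inv_anti₀ hk0 hak.le
      have : (2:ℝ≥0∞) ≤ F k := by
        calc (2:ℝ≥0∞) = ENNReal.ofReal 2 := by norm_num
          _ ≤ ENNReal.ofReal k⁻¹ := ENNReal.ofReal_le_ofReal h2k
          _ = ENNReal.ofReal k⁻¹ * 1 := (mul_one _).symm
          _ ≤ F k := mul_le_mul' le_rfl le_self_add
      exact absurd (lt_of_le_of_lt this hF2) (lt_irrefl _)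
    · by_contra hbk
      push_neg at hbk
      exact absurd (lt_of_le_of_lt (hGlbk k hbk.le) hF2) (lt_irrefl _)
  choose K hKmem hKlt using hseq
  obtain ⟨kst, hkstmem, σ, hσmono, hσtend⟩ :=
    (isCompact_Icc (a := (2⁻¹:ℝ)) (b := b)).tendsto_subseq hKmem
  have hkst0 : 0 < kst := lt_of_lt_of_le (by norm_num : (0:ℝ) < 2⁻¹) hkstmem.1
  -- an increasing sequence converging to kst from the left
  set c : ℕ → ℝ := fun j => kst - kst/((j:ℝ)+2) with hcdef
  have hfrac : ∀ j : ℕ, 0 < kst/((j:ℝ)+2) := fun j => by positivity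
  have hcpos : ∀ j, 0 < c j := by
    intro j
    have h1 : kst/((j:ℝ)+2) < kst := div_lt_self hkst0 (by
      have : (0:ℝ) ≤ (j:ℝ) := Nat.cast_nonneg j
      linarith)
    simp only [hcdef]
    linarith
  have hclt : ∀ j, c j < kst := fun j => sub_lt_self _ (hfrac j)
  have hcmono : Monotone c := by
    intro i j hij
    have h1 : kst/((j:ℝ)+2) ≤ kst/((i:ℝ)+2) := by
      apply div_le_div_of_nonneg_left hkst0.le (by positivity)
      have : (i:ℝ) ≤ (j:ℝ) := Nat.cast_le.mpr hij
      linarith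
    simp only [hcdef]
    linarith
  have hctend : Tendsto c atTop (𝓝 kst) := by
    have h1 := (tendsto_const_div_atTop_nhds_zero_nat kst).comp (tendsto_add_atTop_nat 2)
    have h2 : Tendsto (fun j : ℕ => kst/((j:ℝ)+2)) atTop (𝓝 0) := by
      have : (fun j : ℕ => kst/((j:ℝ)+2)) = (fun n : ℕ => kst / (n:ℝ)) ∘ (fun a => a + 2) := by
        funext j
        simp only [Function.comp_apply]
        push_cast
        ring
      rw [this]
      exact h1
    have h3 := tendsto_const_nhds (x := kst) (f := atTop (α := ℕ)) |>.sub h2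
    simpa using h3
  -- left continuity of G at kst via monotone convergence
  have hMCT : Tendsto (fun j => G (c j)) atTop (𝓝 (G kst)) := by
    apply lintegral_tendsto_of_tendsto_of_monotone
    · intro j
      apply Measurable.aemeasurable
      refine Measurable.mul ?_ hgmeas
      have hanti : Antitone (fun t => phiE φ (ENNReal.ofReal (c j) * X t)) :=
        fun s t hst => hpE (mul_le_mul' le_rfl (hXanti hst))
      exact hanti.measurable
    · exact ae_of_all _ fun t i j hij =>
        mul_le_mul' (hpE (mul_le_mul' (ENNReal.ofReal_le_ofReal (hcmono hij)) le_rfl)) le_rfl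
    · filter_upwards [ae_restrict_mem measurableSet_Ioi] with t ht
      have hXt := hXfin t ht
      set s := (X t).toReal with hsdef
      have hXval : X t = ENNReal.ofReal s := (ENNReal.ofReal_toReal hXt).symm
      have hkey : ∀ r : ℝ, 0 ≤ r →
          phiE φ (ENNReal.ofReal r * X t) = ENNReal.ofReal (φ (r * s)) := by
        intro r hr
        rw [hXval, ← ENNReal.ofReal_mul hr,
          phiE_ofReal φ (mul_nonneg hr ENNReal.toReal_nonneg)]
      have hfun : (fun j => phiE φ (ENNReal.ofReal (c j) * X t) * g t)
          = fun j => ENNReal.ofReal (φ (c j * s)) * g t :=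
        funext fun j => by rw [hkey _ (hcpos j).le]
      rw [hfun, hkey kst hkst0.le]
      refine ENNReal.Tendsto.mul_const ?_ (Or.inr ?_)
      · refine (ENNReal.continuous_ofReal.tendsto _).comp ?_
        rcases eq_or_lt_of_le (ENNReal.toReal_nonneg : (0:ℝ) ≤ s) with hs0 | hs0
        · have hz : ∀ r : ℝ, r * s = 0 := fun r => by rw [hsdef, ← hs0, mul_zero]
          simp only [hz]
          exact tendsto_const_nhds
        · have hcont : ContinuousOn φ (Ioi 0) :=
            (hconv.subset Ioi_subset_Ici_self (convex_Ioi 0)).continuousOn isOpen_Ioi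
          have hmem : kst * s ∈ Ioi (0:ℝ) := mul_pos hkst0 hs0
          have h0 : Tendsto (fun j => c j * s) atTop (𝓝 (kst * s)) := hctend.mul_const s
          exact ((hcont.continuousAt (isOpen_Ioi.mem_nhds hmem)).tendsto).comp h0
      · rw [← hgeq t ht]
        exact ENNReal.ofReal_ne_top
  -- the key inequality at the limit point
  have hcore : ∀ j, ENNReal.ofReal kst⁻¹ * (1 + G (c j)) ≤ 1 := by
    intro j
    have hev : ∀ᶠ n in atTop, c j ≤ K (σ n) :=
      hσtend.eventually (eventually_ge_nhds (hclt j))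
    have hle : ∀ᶠ n in atTop, ENNReal.ofReal (K (σ n))⁻¹ * (1 + G (c j))
        ≤ 1 + ENNReal.ofReal (1/((σ n : ℝ)+1)) := by
      filter_upwards [hev] with n hn
      calc ENNReal.ofReal (K (σ n))⁻¹ * (1 + G (c j))
          ≤ ENNReal.ofReal (K (σ n))⁻¹ * (1 + G (K (σ n))) :=
            mul_le_mul' le_rfl (add_le_add le_rfl (hGmono hn))
        _ = F (K (σ n)) := rfl
        _ ≤ 1 + ENNReal.ofReal (1/((σ n : ℝ)+1)) := (hKlt (σ n)).le
    have hL : Tendsto (fun n => ENNReal.ofReal (K (σ n))⁻¹ * (1 + G (c j))) atTop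
        (𝓝 (ENNReal.ofReal kst⁻¹ * (1 + G (c j)))) := by
      refine ENNReal.Tendsto.mul_const ?_ (Or.inl ?_)
      · exact (ENNReal.continuous_ofReal.tendsto _).comp (hσtend.inv₀ hkst0.ne')
      · exact ne_of_gt (ENNReal.ofReal_pos.mpr (inv_pos.mpr hkst0))
    have hR : Tendsto (fun n : ℕ => (1:ℝ≥0∞) + ENNReal.ofReal (1/((σ n : ℝ)+1))) atTop
        (𝓝 1) := by
      have h1 : Tendsto (fun n : ℕ => 1/((σ n : ℝ)+1)) atTop (𝓝 0) :=
        tendsto_one_div_add_atTop_nhds_zero_nat.comp hσmono.tendsto_atTop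
      have h2 : Tendsto (fun n : ℕ => ENNReal.ofReal (1/((σ n : ℝ)+1))) atTop (𝓝 0) := by
        have := (ENNReal.continuous_ofReal.tendsto 0).comp h1
        simpa [Function.comp_def] using this
      have := tendsto_const_nhds (x := (1:ℝ≥0∞)) (f := atTop (α := ℕ)) |>.add h2
      simpa using this
    exact le_of_tendsto_of_tendsto hL hR hle
  have hlim2 : Tendsto (fun j => ENNReal.ofReal kst⁻¹ * (1 + G (c j))) atTop
      (𝓝 (ENNReal.ofReal kst⁻¹ * (1 + G kst))) :=
    ENNReal.Tendsto.const_mul (tendsto_const_nhds.add hMCT) (Or.inr ENNReal.ofReal_ne_top)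
  have hle1 : ENNReal.ofReal kst⁻¹ * (1 + G kst) ≤ 1 :=
    le_of_tendsto hlim2 (Eventually.of_forall hcore)
  have hge1 : 1 ≤ F kst := hFge kst hkst0
  constructor
  · refine ⟨kst, hkst0, ?_⟩
    rw [hxnorm, hrhoG kst hkst0]
    exact le_antisymm hge1 hle1
  -- Part 2 : boundedness of the k** set
  · -- ψ basic facts
    have hbddA : ∀ v : ℝ, 0 ≤ v → BddAbove ((fun u => u * v - φ u) '' Ioi 0) := by
      intro v hv
      obtain ⟨U₂, hU₂⟩ : ∃ U₂ : ℝ, ∀ u ≥ U₂, v + 1 ≤ φ u / u :=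
        eventually_atTop.mp (hNinf.eventually (eventually_ge_atTop (v+1)))
      refine ⟨max U₂ 1 * v, ?_⟩
      rintro y ⟨u, hu, rfl⟩
      have hu0 : (0:ℝ) < u := hu
      by_cases huU : u ≤ max U₂ 1
      · have h1 : u * v ≤ max U₂ 1 * v := mul_le_mul_of_nonneg_right huU hv
        have h2 := hφnn u hu0.le
        simp only
        linarith
      · push_neg at huU
        have h3 : v + 1 ≤ φ u / u := hU₂ u (le_trans (le_max_left _ _) huU.le)
        have h4 : (v+1) * u ≤ φ u := (le_div_iff₀ hu0).mp h3
        have h5 : 0 ≤ max U₂ 1 * v := mul_nonneg (le_trans zero_le_one (le_max_right _ _)) hv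
        simp only
        nlinarith
    have hψ_ge : ∀ v : ℝ, 0 ≤ v → ∀ u : ℝ, 0 < u → u * v - φ u ≤ ψ v := by
      intro v hv u hu
      rw [hψ v hv]
      exact le_csSup (hbddA v hv) (mem_image_of_mem _ hu)
    have hψmono : ∀ v₁ v₂ : ℝ, 0 ≤ v₁ → v₁ ≤ v₂ → ψ v₁ ≤ ψ v₂ := by
      intro v₁ v₂ h1 h12
      rw [hψ v₁ h1]
      refine csSup_le ⟨1 * v₁ - φ 1, mem_image_of_mem _ (mem_Ioi.mpr one_pos)⟩ ?_
      rintro y ⟨u, hu, rfl⟩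
      have hu0 : (0:ℝ) < u := hu
      calc u * v₁ - φ u ≤ u * v₂ - φ u := by nlinarith
        _ ≤ ψ v₂ := hψ_ge v₂ (le_trans h1 h12) u hu0
    -- p dominates φ(u)/u
    have hpInt : ∀ u : ℝ, 0 < u → IntegrableOn p (Ioc (0:ℝ) u) := by
      intro u hu
      have h1 : MonotoneOn p (Icc (0:ℝ) u) := hpmono.mono Icc_subset_Ici_self
      exact (h1.integrableOn_isCompact isCompact_Icc).mono_set Ioc_subset_Icc_self
    have hpu : ∀ u : ℝ, 0 < u → φ u / u ≤ p u := by
      intro u hu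
      rw [div_le_iff₀ hu]
      calc φ u = ∫ t in Ioc (0:ℝ) u, p t := hφint u hu.le
        _ ≤ ∫ _ in Ioc (0:ℝ) u, p u := by
            refine setIntegral_mono_on (hpInt u hu) ?_ measurableSet_Ioc ?_
            · refine integrableOn_const (ne_of_lt ?_)
              rw [Real.volume_Ioc]
              exact ENNReal.ofReal_lt_top
            · intro t ht
              exact hpmono (mem_Ici.mpr ht.1.le) (mem_Ici.mpr hu.le) ht.2
        _ = p u * u := by
            rw [setIntegral_const, Real.volume_real_Ioc_of_le hu.le, sub_zero,
              smul_eq_mul, mul_comm]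
    -- the bound
    set Kb : ℝ := max 1 (U/r₀) with hKbdef
    have hKb1 : (1:ℝ) ≤ Kb := le_max_left _ _
    have hKb0 : 0 < Kb := lt_of_lt_of_le one_pos hKb1
    have hKbr : U ≤ Kb * r₀ := by
      rw [← div_le_iff₀ hr₀pos]
      exact le_max_right _ _
    have hKbr0 : 0 < Kb * r₀ := by positivity
    have hwdd : 0 < ω d * d := by positivity
    have hBge : 2/(ω d * d) ≤ p (Kb*r₀) - φ 1 := by
      have h5 := hpu (Kb*r₀) hKbr0
      have h6 := hU _ hKbr
      have h7 : φ 1 + 2/(ω d * d) ≤ A := by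
        have h8 : (0:ℝ) ≤ 2/(r₀*(ω d * d)) := by positivity
        have h9 : φ 1 ≤ |φ 1| := le_abs_self _
        rw [hAdef]
        linarith
      linarith
    have hBpos : 0 < p (Kb*r₀) - φ 1 := lt_of_lt_of_le (by positivity) hBge
    refine ⟨Kb, ?_⟩
    rintro k ⟨hk0, hkint⟩
    by_contra hkK
    push_neg at hkK
    -- pointwise lower bound for the integrand
    have hpt : ∀ t ∈ Ioc (0:ℝ) d,
        ENNReal.ofReal ((p (Kb*r₀) - φ 1) * ω d)
          ≤ ENNReal.ofReal (ψ (p (k * (rearr x t).toReal)) * ω t) := by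
      intro t ht
      have hXt : ENNReal.ofReal r₀ ≤ X t := hXge t ht
      have hXfin' : X t ≠ ∞ := hXfin t (Ioc_subset_Ioi_self ht)
      have hst : r₀ ≤ (X t).toReal :=
        (ENNReal.ofReal_le_iff_le_toReal hXfin').mp hXt
      have hst0 : 0 < (X t).toReal := lt_of_lt_of_le hr₀pos hst
      have hp1 : p (Kb*r₀) - φ 1 ≤ ψ (p (Kb*r₀)) := by
        have := hψ_ge (p (Kb*r₀)) (hpnn _ hKbr0.le) 1 one_pos
        simpa using this
      have hchain : ψ (p (Kb * r₀)) ≤ ψ (p (k * (X t).toReal)) := by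
        refine hψmono _ _ (hpnn _ hKbr0.le) ?_
        refine hpmono (mem_Ici.mpr hKbr0.le) (mem_Ici.mpr (by positivity)) ?_
        have hkk : Kb ≤ k := hkK.le
        nlinarith
      have hωt : ω d ≤ ω t := hωanti (mem_Ioi.mpr ht.1) (mem_Ioi.mpr hd) ht.2
      refine ENNReal.ofReal_le_ofReal ?_
      have hψnn : 0 ≤ ψ (p (k * (X t).toReal)) :=
        le_trans hBpos.le (le_trans hp1 hchain)
      calc (p (Kb*r₀) - φ 1) * ω d ≤ ψ (p (k * (X t).toReal)) * ω d :=
            mul_le_mul_of_nonneg_right (le_trans hp1 hchain) hωd.le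
        _ ≤ ψ (p (k * (X t).toReal)) * ω t := mul_le_mul_of_nonneg_left hωt hψnn
        _ = ψ (p (k * (rearr x t).toReal)) * ω t := by rw [← hX]
    have hint := hlow _ _ d hd hpt
    have hcontr : (1:ℝ≥0∞) < ENNReal.ofReal ((p (Kb*r₀) - φ 1) * ω d) * ENNReal.ofReal d := by
      rw [← ENNReal.ofReal_mul (mul_nonneg hBpos.le hωd.le), ← ENNReal.ofReal_one]
      refine (ENNReal.ofReal_lt_ofReal_iff ?_).mpr ?_
      · positivity
      · have h10 : (2:ℝ) ≤ (p (Kb*r₀) - φ 1) * (ω d * d) := by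
          calc (2:ℝ) = 2/(ω d * d) * (ω d * d) := (div_mul_cancel₀ 2 hwdd.ne').symm
            _ ≤ (p (Kb*r₀) - φ 1) * (ω d * d) :=
                mul_le_mul_of_nonneg_right hBge hwdd.le
        nlinarith
    exact absurd (lt_of_lt_of_le (lt_of_lt_of_le hcontr hint) hkint) (lt_irrefl _)
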